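/- Given a Latin square λ of size N and a collection of N complex Hadamard matrices H^(1),…,H^(N) of size N (unitary matrices with all entries of modulus 1/√N after rescaling), the N² matrices U^(i,j) = Σ_{k=1}^N H^(j)_{i,k} |λ(j,k)⟩⟨k| (for i,j = 1,…,N) are unitary and form an orthogonal basis of the Hilbert–Schmidt space of N×N complex matrices: Tr(U^(i,j)† U^(i',j')) = N δ_{ii'} δ_{jj'}. -/

import Mathlib

open Matrix

/-- Werner's shift-and-multiply construction: given a Latin
square `lam` and complex Hadamard matrices `H⁽ʲ⁾` (entries of modulus 1,
unitary after rescaling by `1/√N`), the `N²` matrices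
`U^(i,j) = Σ_k H^(j)_{i,k} |λ(j,k)⟩⟨k|` are unitary and orthogonal in the
Hilbert–Schmidt inner product: `Tr(U^(i,j)† U^(i',j')) = N δ_{ii'} δ_{jj'}`. -/
theorem stmt10 (N : ℕ) (hN : 0 < N)
    (lam : Fin N → Fin N → Fin N)
    (hrow : ∀ j, Function.Bijective (lam j))
    (hcol : ∀ k, Function.Bijective fun j => lam j k)
    (H : Fin N → Matrix (Fin N) (Fin N) ℂ)
    (hHunit : ∀ j, (H j)ᴴ * H j = (N : ℂ) • 1)
    (hHmod : ∀ j a b, ‖H j a b‖ = 1)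
    (U : Fin N → Fin N → Matrix (Fin N) (Fin N) ℂ)
    (hUdef : ∀ i j, U i j = Matrix.of fun a b => if a = lam j b then H j i b else 0) :
    (∀ i j, (U i j)ᴴ * U i j = 1) ∧
      ∀ i j i' j', ((U i j)ᴴ * U i' j').trace =
        if i = i' ∧ j = j' then (N : ℂ) else 0 := by
  have hN' : (N : ℂ) ≠ 0 := Nat.cast_ne_zero.mpr hN.ne'
  have key : ∀ j, H j * (H j)ᴴ = (N : ℂ) • 1 := by
    intro j
    have h1 : (H j)ᴴ * ((N : ℂ)⁻¹ • H j) = 1 := by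
      rw [Matrix.mul_smul, hHunit j, smul_smul, inv_mul_cancel₀ hN', one_smul]
    have h2 := mul_eq_one_comm.mp h1
    calc H j * (H j)ᴴ = (N : ℂ) • (((N : ℂ)⁻¹ • H j) * (H j)ᴴ) := by
          rw [Matrix.smul_mul, smul_smul, mul_inv_cancel₀ hN', one_smul]
      _ = (N : ℂ) • 1 := by rw [h2]
  have hmodc : ∀ j i b, star (H j i b) * H j i b = 1 := by
    intro j i b
    have h := hHmod j i b
    rw [Complex.star_def, ← Complex.normSq_eq_conj_mul_self]
    norm_cast
    rw [← Complex.sq_norm, h]; norm_num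
  -- entry formula
  have hentry : ∀ i j i' j' b b', ((U i j)ᴴ * U i' j') b b' =
      if lam j b = lam j' b' then star (H j i b) * H j' i' b' else 0 := by
    intro i j i' j' b b'
    simp only [hUdef, Matrix.mul_apply, Matrix.conjTranspose_apply, Matrix.of_apply]
    rw [Finset.sum_eq_single (lam j b)]
    · simp only [if_pos rfl]
      by_cases h : lam j b = lam j' b'
      · simp [h]
      · simp [h, Ne.symm h]
    · intro a _ ha
      simp [if_neg ha]
    · intro h; exact absurd (Finset.mem_univ _) h
  constructor
  · intro i j
    ext b b'
    rw [hentry]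
    by_cases hbb : b = b'
    · subst hbb
      rw [if_pos rfl, Matrix.one_apply_eq]
      exact hmodc j i b
    · have h : lam j b ≠ lam j b' := fun h => hbb ((hrow j).1 h)
      simp [h, Matrix.one_apply, hbb]
  · intro i j i' j'
    have : ((U i j)ᴴ * U i' j').trace =
        ∑ b, if lam j b = lam j' b then star (H j i b) * H j' i' b else 0 := by
      simp only [Matrix.trace, Matrix.diag]
      exact Finset.sum_congr rfl fun b _ => hentry i j i' j' b b
    rw [this]
    by_cases hj : j = j'
    · subst hj
      have hkey := congrFun (congrFun (key j) i') i
      simp only [Matrix.mul_apply, Matrix.conjTranspose_apply, Matrix.smul_apply,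
        Matrix.one_apply, smul_eq_mul] at hkey
      have hsum : (∑ b, if lam j b = lam j b then star (H j i b) * H j i' b else 0)
          = ∑ b, H j i' b * star (H j i b) :=
        Finset.sum_congr rfl fun b _ => by rw [if_pos rfl, mul_comm]
      rw [hsum, hkey]
      by_cases hi : i = i'
      · simp [hi]
      · simp [hi, Ne.symm hi]
    · have hz : ∀ b, lam j b ≠ lam j' b := fun b h => hj ((hcol b).1 h)
      simp [hz, hj]
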